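/- Fix ε ∈ ℂ with ε ≠ 0 and set (B₁,B₂) = v_ε = ( !![0,ε; 0,0], !![0,ε; 0,0] ). Then the subset of M₂(ℂ) × M₂(ℂ) given by { ( w·B₁ − T·X₂ᵀ·T·B₁ − B₁·X₁ , X₂·B₂ − B₂·X₁ ) : X₁, X₂ ∈ M₂(ℂ), trace X₁ = 0, w ∈ ℂ } (the tangent space at v_ε to the H-orbit of v_ε, i.e. the image of the Lie algebra of H under the differentiated action) equals the four-dimensional subspace { ( !![a,b; 0,c], !![a,d; 0,−c] ) : a,b,c,d ∈ ℂ }. Moreover, every pair (C₁,C₂) in this subspace satisfies Tr( !![1,0; 1,1]ᵀ · C₁ ) + Tr( !![−1,0; 0,1]ᵀ · C₂ ) = 0, i.e. the covector ξ = ( !![1,0; 1,1], !![−1,0; 0,1] ) annihilates this tangent space. -/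
import Mathlib


open Matrix

/-- The matrix `T = !![0,1; 1,0]`. -/
def MT : Matrix (Fin 2) (Fin 2) ℂ := !![0, 1; 1, 0]

theorem stmt6 (ε : ℂ) (hε : ε ≠ 0) :
    ({p : Matrix (Fin 2) (Fin 2) ℂ × Matrix (Fin 2) (Fin 2) ℂ |
        ∃ (X₁ X₂ : Matrix (Fin 2) (Fin 2) ℂ) (w : ℂ), X₁.trace = 0 ∧
          p = (w • (!![0, ε; 0, 0] : Matrix (Fin 2) (Fin 2) ℂ)
                - MT * X₂ᵀ * MT * !![0, ε; 0, 0]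
                - !![0, ε; 0, 0] * X₁,
              X₂ * !![0, ε; 0, 0] - !![0, ε; 0, 0] * X₁)} =
      {p : Matrix (Fin 2) (Fin 2) ℂ × Matrix (Fin 2) (Fin 2) ℂ |
        ∃ a b c d : ℂ, p = (!![a, b; 0, c], !![a, d; 0, -c])}) ∧
    (∀ C₁ C₂ : Matrix (Fin 2) (Fin 2) ℂ,
      (∃ a b c d : ℂ, (C₁, C₂) = (!![a, b; 0, c], !![a, d; 0, -c])) →
        ((!![1, 0; 1, 1] : Matrix (Fin 2) (Fin 2) ℂ)ᵀ * C₁).trace +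
          ((!![-1, 0; 0, 1] : Matrix (Fin 2) (Fin 2) ℂ)ᵀ * C₂).trace = 0) := by
  constructor
  · ext p
    simp only [Set.mem_setOf_eq]
    constructor
    · rintro ⟨X₁, X₂, w, htr, hp⟩
      refine ⟨-ε * X₁ 1 0, ε * (w - X₂ 1 1 - X₁ 1 1), -ε * X₂ 1 0,
        ε * (X₂ 0 0 - X₁ 1 1), ?_⟩
      rw [hp]
      refine Prod.ext ?_ ?_ <;>
      · ext i j
        fin_cases i <;> fin_cases j <;>
          simp [MT, Matrix.mul_apply, Fin.sum_univ_two, Matrix.vecHead, Matrix.vecTail,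
            Matrix.vecMul, dotProduct] <;> ring
    · rintro ⟨a, b, c, d, hp⟩
      refine ⟨!![0, 0; -a/ε, 0], !![d/ε, 0; -c/ε, 0], b/ε, ?_, ?_⟩
      · simp [Matrix.trace_fin_two]
      · rw [hp]
        refine Prod.ext ?_ ?_ <;>
        · ext i j
          fin_cases i <;> fin_cases j <;>
            simp [MT, Matrix.mul_apply, Fin.sum_univ_two, Matrix.vecHead, Matrix.vecTail,
              Matrix.vecMul, dotProduct] <;> field_simp
  · rintro C₁ C₂ ⟨a, b, c, d, h⟩
    rw [Prod.mk.injEq] at h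
    obtain ⟨h1, h2⟩ := h
    subst h1; subst h2
    simp [Matrix.trace_fin_two, Matrix.mul_apply, Fin.sum_univ_two, Matrix.vecHead,
      Matrix.vecTail]
    ring_nf
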